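/- Let P(0) = 1/3 and P(n) = 2/(π² n²) for n ≠ 0. Then Σ_{n∈ℤ} P(n) = 1, and the ℓ-fold self-convolution satisfies P^{*ℓ}(0) = ∫_0^1 (4(x - 1/2)²)^ℓ dx = 1/(2ℓ+1). -/

import Mathlib

open Real

/-- Convolution of distributions on `ℤ`. -/
noncomputable def conv (P Q : ℤ → ℝ) : ℤ → ℝ := fun n => ∑' m : ℤ, P m * Q (n - m)

/-- `ℓ`-fold self-convolution (with `P^{*0}` the delta at `0`). -/
noncomputable def convIter (P : ℤ → ℝ) : ℕ → ℤ → ℝ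
  | 0 => fun n => if n = 0 then 1 else 0
  | (ℓ + 1) => conv P (convIter P ℓ)

namespace Stmt18Aux

open MeasureTheory

lemma B2_eval (x : ℝ) :
    (Polynomial.map (algebraMap ℚ ℝ) (Polynomial.bernoulli 2)).eval x = x^2 - x + 1/6 := by
  rw [Polynomial.bernoulli]
  simp [Finset.sum_range_succ, bernoulli_one, bernoulli_zero,
    bernoulli_eq_bernoulli'_of_ne_one, bernoulli'_two]
  ring

lemma natCos {x : ℝ} (hx : x ∈ Set.Icc (0:ℝ) 1) :
    HasSum (fun n : ℕ => 1 / (n:ℝ)^2 * Real.cos (2*π*n*x)) (π^2 * (x^2 - x + 1/6)) := by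
  have h := hasSum_one_div_nat_pow_mul_cos (k := 1) one_ne_zero hx
  rw [B2_eval] at h
  convert h using 2
  norm_num [Nat.factorial]
  ring

lemma cosInt (n : ℤ) : (∫ x in (0:ℝ)..1, Real.cos (2*π*n*x)) = if n = 0 then 1 else 0 := by
  rcases eq_or_ne n 0 with rfl | hn
  · simp
  · rw [if_neg hn]
    have hn' : (n:ℝ) ≠ 0 := Int.cast_ne_zero.mpr hn
    have h2 : (2*π*(n:ℝ)) ≠ 0 := by
      have := Real.pi_ne_zero; positivity
    rw [intervalIntegral.integral_comp_mul_left Real.cos h2, integral_cos]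
    have h3 : Real.sin (2*π*n) = 0 := by
      have := Real.sin_int_mul_pi (2*n)
      push_cast at this ⊢
      rw [show 2*π*(n:ℝ) = (2*(n:ℝ))*π by ring]
      exact this
    simp [h3]

lemma valueInt (ℓ : ℕ) :
    (∫ x in (0:ℝ)..1, (4*(x - 1/2)^2)^ℓ) = 1/(2*(ℓ:ℝ)+1) := by
  have h1 : ∀ x : ℝ, (4*(x - 1/2)^2)^ℓ = (4:ℝ)^ℓ * (x - 1/2)^(2*ℓ) := by
    intro x
    rw [mul_pow, ← pow_mul]
  simp_rw [h1]
  rw [intervalIntegral.integral_const_mul]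
  rw [intervalIntegral.integral_comp_sub_right (fun x => x^(2*ℓ)) (1/2)]
  rw [integral_pow]
  have hodd : Odd (2*ℓ+1) := ⟨ℓ, by ring⟩
  norm_num
  rw [hodd.neg_pow]
  have h2 : ((1:ℝ)/2)^(2*ℓ+1) = 1/(2^(2*ℓ+1)) := by
    rw [div_pow, one_pow]
  have h4 : (4:ℝ)^ℓ = 2^(2*ℓ) := by
    rw [pow_mul]; norm_num
  have hpos : (0:ℝ) < 2*(ℓ:ℝ)+1 := by positivity
  field_simp
  ring_nf
  rw [mul_comm ℓ 2, h4, ← mul_pow]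
  norm_num

section
variable {P : ℤ → ℝ}
  (hP : ∀ n : ℤ, P n = if n = 0 then 1 / 3 else 2 / (π ^ 2 * (n : ℝ) ^ 2))
include hP

lemma keyCos {x : ℝ} (hx : x ∈ Set.Icc (0:ℝ) 1) :
    HasSum (fun m : ℤ => P m * Real.cos (2*π*m*x)) (4*(x - 1/2)^2) := by
  have hpi : (π:ℝ) ^ 2 ≠ 0 := pow_ne_zero 2 Real.pi_ne_zero
  have hb := natCos hx
  have hu : HasSum (fun n : ℕ => 2/π^2 * (1/(n:ℝ)^2 * Real.cos (2*π*n*x)))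
      (2*(x^2 - x + 1/6)) := by
    have := hb.mul_left (2/π^2)
    convert this using 1
    · rfl
    rw [← mul_assoc, div_mul_cancel₀ (2:ℝ) hpi]
  have hv : HasSum (fun n : ℕ => if n = 0 then (1/3:ℝ) else 0) (1/3) :=
    hasSum_ite_eq 0 (1/3)
  have hpos : HasSum (fun n : ℕ => P (n:ℤ) * Real.cos (2*π*n*x))
      (2*(x^2 - x + 1/6) + 1/3) := by
    have h := hu.add hv
    convert h using 1
    funext n
    rcases eq_or_ne n 0 with rfl | hn
    · simp [hP]
    · have hz : ((n:ℤ)) ≠ 0 := Int.natCast_ne_zero.mpr hn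
      simp only [hP, if_neg hz, if_neg hn, add_zero]
      push_cast
      ring
  have hneg : HasSum (fun n : ℕ => P ((n:ℤ)+1) * Real.cos (2*π*((n:ℝ)+1)*x))
      (2*(x^2 - x + 1/6)) := by
    have hs0 : (∑ i ∈ Finset.range 1, P (i:ℤ) * Real.cos (2*π*(i:ℝ)*x)) = 1/3 := by
      simp [hP]
    have h' : HasSum (fun n : ℕ => P (n:ℤ) * Real.cos (2*π*(n:ℝ)*x))
        (2*(x^2 - x + 1/6) + ∑ i ∈ Finset.range 1, P (i:ℤ) * Real.cos (2*π*(i:ℝ)*x)) := by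
      rw [hs0]; exact hpos
    have h2 := (hasSum_nat_add_iff (f := fun n : ℕ => P (n:ℤ) * Real.cos (2*π*(n:ℝ)*x)) 1).mpr h'
    convert h2 using 2 with n
    · rfl
    push_cast
    ring_nf
  have hpos2 : HasSum (fun n : ℕ => P ((n:ℕ):ℤ) * Real.cos (2*π*(((n:ℕ):ℤ):ℝ)*x))
      (2*(x^2 - x + 1/6) + 1/3) := by
    convert hpos using 3
    simp
  have hneg2 : HasSum (fun n : ℕ => P (-((n:ℤ)+1)) * Real.cos (2*π*((-((n:ℤ)+1) : ℤ):ℝ)*x))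
      (2*(x^2 - x + 1/6)) := by
    have heq : ∀ n : ℕ, P (-((n:ℤ)+1)) * Real.cos (2*π*((-((n:ℤ)+1):ℤ):ℝ)*x)
        = P ((n:ℤ)+1) * Real.cos (2*π*((n:ℝ)+1)*x) := by
      intro n
      have hne : ((n:ℤ)+1) ≠ 0 := by positivity
      have hne' : -((n:ℤ)+1) ≠ 0 := neg_ne_zero.mpr hne
      have h1 : P (-((n:ℤ)+1)) = P ((n:ℤ)+1) := by
        rw [hP, hP, if_neg hne, if_neg hne']
        push_cast; ring_nf
      rw [h1]
      congr 1
      push_cast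
      rw [show (2*π*(-((n:ℝ)+1))*x) = -(2*π*((n:ℝ)+1)*x) by ring, Real.cos_neg]
    simpa only [heq] using hneg
  have htot : HasSum (fun m : ℤ => P m * Real.cos (2*π*(m:ℝ)*x))
      ((2*(x^2 - x + 1/6) + 1/3) + 2*(x^2 - x + 1/6)) :=
    HasSum.of_nat_of_neg_add_one hpos2 hneg2
  convert htot using 1
  ring

lemma Ppos : ∀ m : ℤ, 0 < P m := by
  intro m
  rw [hP]
  rcases eq_or_ne m 0 with rfl | hm
  · norm_num
  · rw [if_neg hm]
    have : (m:ℝ) ≠ 0 := Int.cast_ne_zero.mpr hm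
    positivity

lemma Psummable : Summable P := by
  have h := keyCos hP (x := 0) (by norm_num)
  simpa using h.summable

lemma Ptsum : (∑' m : ℤ, P m) = 1 := by
  have h := keyCos hP (x := 0) (by norm_num)
  simp only [mul_zero, Real.cos_zero, mul_one] at h
  rw [h.tsum_eq]
  norm_num

lemma keySin (x : ℝ) :
    HasSum (fun m : ℤ => P m * Real.sin (2*π*m*x)) 0 := by
  have hsum : Summable (fun m : ℤ => P m * Real.sin (2*π*m*x)) := by
    apply ((Psummable hP).abs).of_norm_bounded
    intro m
    rw [Real.norm_eq_abs, abs_mul]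
    calc |P m| * |Real.sin (2*π*m*x)| ≤ |P m| * 1 :=
          mul_le_mul_of_nonneg_left (abs_sin_le_one _) (abs_nonneg _)
      _ = |P m| := mul_one _
  obtain ⟨s, hs⟩ := hsum
  have h2 : HasSum ((fun m : ℤ => P m * Real.sin (2*π*m*x)) ∘ (Equiv.neg ℤ)) s :=
    (Equiv.hasSum_iff (Equiv.neg ℤ)).mpr hs
  have h3 : ((fun m : ℤ => P m * Real.sin (2*π*m*x)) ∘ (Equiv.neg ℤ))
      = fun m : ℤ => -(P m * Real.sin (2*π*m*x)) := by
    funext m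
    simp only [Function.comp, Equiv.neg_apply]
    have h1 : P (-m) = P m := by
      rcases eq_or_ne m 0 with rfl | hm
      · simp
      · rw [hP, hP, if_neg hm, if_neg (neg_ne_zero.mpr hm)]
        push_cast; ring_nf
    rw [h1]
    push_cast
    rw [show (2*π*(-(m:ℝ))*x) = -(2*π*(m:ℝ)*x) by ring, Real.sin_neg]
    ring
  rw [h3] at h2
  have h4 : HasSum (fun m : ℤ => P m * Real.sin (2*π*m*x)) (-s) := by
    simpa using h2.neg
  have h5 : s = -s := hs.unique h4
  have hs0 : s = 0 := by linarith
  rwa [hs0] at hs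

lemma keyConv (n : ℤ) {x : ℝ} (hx : x ∈ Set.Icc (0:ℝ) 1) :
    HasSum (fun m : ℤ => P m * Real.cos (2*π*((n - m : ℤ):ℝ)*x))
      ((4*(x - 1/2)^2) * Real.cos (2*π*(n:ℝ)*x)) := by
  have h := ((keyCos hP hx).mul_left (Real.cos (2*π*(n:ℝ)*x))).add
    ((keySin hP x).mul_left (Real.sin (2*π*(n:ℝ)*x)))
  rw [mul_zero, add_zero] at h
  convert h using 1 with m
  · rfl
  · funext m
    push_cast
    rw [show 2*π*((n:ℝ)-(m:ℝ))*x = 2*π*(n:ℝ)*x - 2*π*(m:ℝ)*x by ring, Real.cos_sub]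
    ring
  · ring

lemma mainFormula (ℓ : ℕ) (n : ℤ) :
    convIter P ℓ n = ∫ x in (0:ℝ)..1, (4*(x - 1/2)^2)^ℓ * Real.cos (2*π*(n:ℝ)*x) := by
  induction ℓ generalizing n with
  | zero =>
    simp only [convIter, pow_zero, one_mul, cosInt]
  | succ ℓ ih =>
    show conv P (convIter P ℓ) n = _
    unfold conv
    have hrw : ∀ m : ℤ, P m * convIter P ℓ (n - m)
        = ∫ x in Set.Ioc (0:ℝ) 1, P m * ((4*(x - 1/2)^2)^ℓ * Real.cos (2*π*((n-m:ℤ):ℝ)*x)) := by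
      intro m
      rw [ih (n - m), intervalIntegral.integral_of_le zero_le_one, ← integral_const_mul]
    rw [tsum_congr hrw]
    set F : ℤ → ℝ → ℝ := fun m x => P m * ((4*(x - 1/2)^2)^ℓ * Real.cos (2*π*((n-m:ℤ):ℝ)*x))
      with hF
    have hcont : ∀ m, Continuous (F m) := by
      intro m; fun_prop
    have hF_int : ∀ m : ℤ, IntegrableOn (F m) (Set.Ioc (0:ℝ) 1) := by
      intro m
      exact (hcont m).integrableOn_Ioc
    have hbound : ∀ m : ℤ, ∀ x ∈ Set.Ioc (0:ℝ) 1, ‖F m x‖ ≤ P m := by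
      intro m x hx
      have hx' : x ∈ Set.Icc (0:ℝ) 1 := Set.Ioc_subset_Icc_self hx
      have h1 : |4*(x - 1/2)^2| ≤ 1 := by
        rw [abs_of_nonneg (by positivity)]
        nlinarith [hx'.1, hx'.2]
      have h2 : |(4*(x - 1/2)^2)^ℓ| ≤ 1 := by
        rw [abs_pow]; exact pow_le_one₀ (abs_nonneg _) h1
      have hp := Ppos hP m
      have h3 : |(4*(x-1/2)^2)^ℓ * Real.cos (2*π*((n-m:ℤ):ℝ)*x)| ≤ 1 := by
        rw [abs_mul]
        exact mul_le_one₀ h2 (abs_nonneg _) (abs_cos_le_one _)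
      rw [hF]
      rw [Real.norm_eq_abs, abs_mul]
      calc |P m| * |(4*(x-1/2)^2)^ℓ * Real.cos (2*π*((n-m:ℤ):ℝ)*x)|
          ≤ |P m| * 1 := mul_le_mul_of_nonneg_left h3 (abs_nonneg _)
        _ = P m := by rw [mul_one, abs_of_pos hp]
    have hF_sum : Summable fun m : ℤ => ∫ x in Set.Ioc (0:ℝ) 1, ‖F m x‖ := by
      apply Summable.of_nonneg_of_le
        (fun m => integral_nonneg (fun x => norm_nonneg _)) _ (Psummable hP)
      intro m
      calc (∫ x in Set.Ioc (0:ℝ) 1, ‖F m x‖)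
          ≤ ∫ _x in Set.Ioc (0:ℝ) 1, P m := by
            apply setIntegral_mono_on ((hF_int m).norm) ((integrableOn_const_iff).mpr _)
              measurableSet_Ioc (hbound m)
            right; rw [Real.volume_Ioc]; norm_num
        _ = P m := by simp
    have key := integral_tsum_of_summable_integral_norm (μ := volume.restrict (Set.Ioc (0:ℝ) 1))
      (fun m => hF_int m) hF_sum
    rw [key]
    rw [intervalIntegral.integral_of_le zero_le_one]
    apply setIntegral_congr_fun measurableSet_Ioc
    intro x hx
    have hx' : x ∈ Set.Icc (0:ℝ) 1 := Set.Ioc_subset_Icc_self hx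
    have hs := (keyConv hP n hx').mul_left ((4*(x - 1/2)^2)^ℓ)
    have htt : (∑' m : ℤ, F m x)
        = (4*(x-1/2)^2)^ℓ * ((4*(x-1/2)^2) * Real.cos (2*π*(n:ℝ)*x)) := by
      rw [← hs.tsum_eq]
      apply tsum_congr
      intro m
      rw [hF]
      ring
    dsimp only
    rw [htt]
    ring

end

end Stmt18Aux

/-- For `P(0) = 1/3`, `P(n) = 2/(π²n²)` for `n ≠ 0`: `Σ P(n) = 1` and the
`ℓ`-fold self-convolution satisfies
`P^{*ℓ}(0) = ∫₀¹ (4(x-1/2)²)^ℓ dx = 1/(2ℓ+1)`. -/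
theorem stmt18
    (P : ℤ → ℝ) (hP : ∀ n : ℤ, P n = if n = 0 then 1 / 3 else 2 / (π ^ 2 * (n : ℝ) ^ 2)) :
    (∑' n : ℤ, P n) = 1 ∧
    ∀ ℓ : ℕ, 1 ≤ ℓ →
      convIter P ℓ 0 = ∫ x in (0 : ℝ)..1, (4 * (x - 1 / 2) ^ 2) ^ ℓ ∧
      convIter P ℓ 0 = 1 / (2 * (ℓ : ℝ) + 1) := by
  refine ⟨Stmt18Aux.Ptsum hP, fun ℓ _ => ?_⟩
  have h1 : convIter P ℓ 0 = ∫ x in (0 : ℝ)..1, (4 * (x - 1 / 2) ^ 2) ^ ℓ := by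
    rw [Stmt18Aux.mainFormula hP ℓ 0]
    apply intervalIntegral.integral_congr
    intro x _
    simp
  exact ⟨h1, h1.trans (Stmt18Aux.valueInt ℓ)⟩
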